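/- For every infinite-dimensional Hilbert space (E, ‖·‖₁) there exists a norm ‖·‖₂ on E induced by an inner product, making (E, ‖·‖₂) a Hilbert space, such that ‖·‖₁ and ‖·‖₂ are not equivalent. -/

import Mathlib

/-- `u` is a Cauchy sequence with respect to the norm function `n`. -/
def IsCauchyWith {E : Type*} [AddCommGroup E] (n : E → ℝ) (u : ℕ → E) : Prop :=
  ∀ ε > (0 : ℝ), ∃ N : ℕ, ∀ m ≥ N, ∀ k ≥ N, n (u m - u k) < ε

/-- `E` is complete with respect to the norm function `n`. -/
def CompleteWith {E : Type*} [AddCommGroup E] (n : E → ℝ) : Prop :=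
  ∀ u : ℕ → E, IsCauchyWith n u →
    ∃ l : E, ∀ ε > (0 : ℝ), ∃ N : ℕ, ∀ m ≥ N, n (u m - l) < ε

-- Step 1: build an unbounded linear equivalence on an infinite-dimensional space. build an unbounded linear equivalence on an infinite-dimensional space.
theorem exists_unbounded_equiv {𝕜 E : Type*} [RCLike 𝕜] [NormedAddCommGroup E]
    [InnerProductSpace 𝕜 E] (h : ¬ FiniteDimensional 𝕜 E) :
    ∃ T : E ≃ₗ[𝕜] E, ∀ C : ℝ, ∃ x : E, C * ‖x‖ < ‖T x‖ := by
  set b := Module.Basis.ofVectorSpace 𝕜 E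
  have hinf : Infinite (Module.Basis.ofVectorSpaceIndex 𝕜 E) := by
    by_contra hfin
    rw [not_infinite_iff_finite] at hfin
    exact h (Module.Finite.of_basis b)
  set ι := Module.Basis.ofVectorSpaceIndex 𝕜 E
  obtain ⟨f⟩ : Nonempty (ℕ ↪ ι) := ⟨Infinite.natEmbedding ι⟩
  classical
  set c : ι → 𝕜 := fun i => if i ∈ Set.range f then ((Function.invFun f i : ℕ) + 1 : 𝕜) else 1
    with hc
  have hc0 : ∀ i, c i ≠ 0 := by
    intro i
    simp only [hc]
    split
    · exact Nat.cast_add_one_ne_zero _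
    · exact one_ne_zero
  have hcf : ∀ n : ℕ, c (f n) = ((n : 𝕜) + 1) := by
    intro n
    simp only [hc, if_pos (Set.mem_range_self n)]
    rw [Function.leftInverse_invFun f.injective n]
  set T₀ : E →ₗ[𝕜] E := b.constr 𝕜 (fun i => c i • b i)
  set S₀ : E →ₗ[𝕜] E := b.constr 𝕜 (fun i => (c i)⁻¹ • b i)
  have hTS : T₀.comp S₀ = LinearMap.id := by
    apply b.ext; intro i
    simp [T₀, S₀, Module.Basis.constr_basis, smul_smul]
    rw [inv_mul_cancel₀ (hc0 i), one_smul]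
  have hST : S₀.comp T₀ = LinearMap.id := by
    apply b.ext; intro i
    simp [T₀, S₀, Module.Basis.constr_basis, smul_smul]
    rw [mul_inv_cancel₀ (hc0 i), one_smul]
  refine ⟨LinearEquiv.ofLinear T₀ S₀ hTS hST, ?_⟩
  intro C
  obtain ⟨n, hn⟩ := exists_nat_gt C
  refine ⟨b (f n), ?_⟩
  have hb : T₀ (b (f n)) = c (f n) • b (f n) := b.constr_basis 𝕜 _ _
  have hbn : ‖(b (f n) : E)‖ > 0 := norm_pos_iff.mpr (b.ne_zero (f n))
  rw [show (LinearEquiv.ofLinear T₀ S₀ hTS hST : E ≃ₗ[𝕜] E) (b (f n)) = T₀ (b (f n)) from rfl,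
    hb, norm_smul, hcf]
  have : ‖((n : 𝕜) + 1)‖ = (n : ℝ) + 1 := by
    rw [show ((n : 𝕜) + 1) = ((n + 1 : ℕ) : 𝕜) by push_cast; ring, RCLike.norm_natCast]
    push_cast; ring
  rw [this]
  have : C < (n : ℝ) + 1 := lt_trans hn (by linarith)
  nlinarith

/-- every infinite-dimensional Hilbert space admits a second norm,
induced by an inner product and complete, that is not equivalent to the original. -/
theorem stmt9 {𝕜 E : Type*} [RCLike 𝕜] [NormedAddCommGroup E]
    [InnerProductSpace 𝕜 E] [CompleteSpace E] (h : ¬ FiniteDimensional 𝕜 E) :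
    ∃ c : InnerProductSpace.Core 𝕜 E,
      CompleteWith (fun u : E => Real.sqrt (RCLike.re (c.inner u u))) ∧
      ¬ ∃ c₁ > (0 : ℝ), ∃ c₂ > (0 : ℝ), ∀ u : E,
          c₁ * ‖u‖ ≤ Real.sqrt (RCLike.re (c.inner u u)) ∧
          Real.sqrt (RCLike.re (c.inner u u)) ≤ c₂ * ‖u‖ := by
  obtain ⟨T, hT⟩ := exists_unbounded_equiv (𝕜 := 𝕜) h
  set Core : InnerProductSpace.Core 𝕜 E :=
    { inner := fun x y => @inner 𝕜 E _ (T x) (T y)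
      conj_inner_symm := fun x y => inner_conj_symm _ _
      re_inner_nonneg := fun x => inner_self_nonneg
      add_left := fun x y z => by simp [map_add, inner_add_left]
      smul_left := fun x y r => by simp [map_smul, inner_smul_left]
      definite := fun x hx => by
        have h0 : T x = 0 := inner_self_eq_zero.mp hx
        simpa using T.injective (by simpa using h0) } with hCore
  have key : ∀ u : E, Real.sqrt (RCLike.re (Core.inner u u)) = ‖T u‖ := fun u =>
    (norm_eq_sqrt_re_inner (𝕜 := 𝕜) (T u)).symm
  refine ⟨Core, ?_, ?_⟩
  · intro u hu
    have cauchy : CauchySeq (fun n => T (u n)) := by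
      rw [Metric.cauchySeq_iff]
      intro ε hε
      obtain ⟨N, hN⟩ := hu ε hε
      refine ⟨N, fun m hm k hk => ?_⟩
      have hmk := hN m hm k hk
      beta_reduce at hmk
      rw [key] at hmk
      rwa [dist_eq_norm, ← map_sub]
    obtain ⟨l', hl'⟩ := cauchySeq_tendsto_of_complete cauchy
    refine ⟨T.symm l', ?_⟩
    intro ε hε
    rw [Metric.tendsto_atTop] at hl'
    obtain ⟨N, hN⟩ := hl' ε hε
    refine ⟨N, fun m hm => ?_⟩
    have := hN m hm
    beta_reduce
    rw [key, map_sub, T.apply_symm_apply, ← dist_eq_norm]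
    exact this
  · rintro ⟨c₁, hc₁, c₂, hc₂, hall⟩
    obtain ⟨x, hx⟩ := hT c₂
    have h2 := (hall x).2
    beta_reduce at h2
    rw [key] at h2
    linarith
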